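/- Let V be a finite type, M ≥ 1 an integer, w : V → V → ℤ with |w u v| ≤ M for all u ≠ v, and let w₄ be the four-layer graph on V × Fin 4. Then for every v : V, dist_{w₄}((v,0),(v,3)) < 3M if and only if v lies in a negative triangle of w, i.e., there exist u, z with v, u, z pairwise distinct and w v u + w u z + w z v < 0. -/

import Mathlib

/-- Weight of a walk starting at `u` and visiting the vertices of `p` in order. -/
def walkWeight {V : Type*} (w : V → V → ℕ∞) : V → List V → ℕ∞
  | _, [] => 0
  | u, x :: xs => w u x + walkWeight w x xs

/-- Shortest-path distance: infimum of weights of walks from `u` to `v`. -/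
noncomputable def gdist {V : Type*} (w : V → V → ℕ∞) (u v : V) : ℕ∞ :=
  ⨅ (p : List V) (_ : (u :: p).getLast (List.cons_ne_nil u p) = v), walkWeight w u p

/-- Eccentricity of a vertex. -/
noncomputable def ecc {V : Type*} (w : V → V → ℕ∞) (v : V) : ℕ∞ :=
  ⨆ u, gdist w v u

/-- Radius. -/
noncomputable def rad {V : Type*} (w : V → V → ℕ∞) : ℕ∞ :=
  ⨅ v, ecc w v

/-- Diameter. -/
noncomputable def diam {V : Type*} (w : V → V → ℕ∞) : ℕ∞ :=
  ⨆ v, ecc w v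

/-- Four-layer graph on `V × Fin 4` (parts A, B, C, D): edges `(u,i) → (v,i+1)` of weight
`M + w u v` for each `i ∈ {0,1,2}` and `u ≠ v`; all other weights `⊤`. -/
def layer4 {V : Type*} [DecidableEq V] (w : V → V → ℤ) (M : ℤ) :
    V × Fin 4 → V × Fin 4 → ℕ∞ := fun p q =>
  if p.1 ≠ q.1 ∧ (q.2 : ℕ) = (p.2 : ℕ) + 1 then ((M + w p.1 q.1).toNat : ℕ∞) else ⊤

theorem stmt16 {V : Type*} [Fintype V] [DecidableEq V] (M : ℤ) (hM : 1 ≤ M)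
    (w : V → V → ℤ) (hbound : ∀ u v : V, u ≠ v → |w u v| ≤ M) :
    ∀ v : V,
      gdist (layer4 w M) (v, 0) (v, 3) < ((3 * M).toNat : ℕ∞) ↔
        ∃ u z : V, v ≠ u ∧ v ≠ z ∧ u ≠ z ∧ w v u + w u z + w z v < 0 := by
  intro v
  constructor
  · intro h
    rw [gdist] at h
    simp only [iInf_lt_iff] at h
    obtain ⟨p, hlast, hw⟩ := h
    match p with
    | [] => simp [Prod.ext_iff] at hlast
    | [a] =>
      simp [List.getLast] at hlast
      subst hlast
      simp only [walkWeight, layer4] at hw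
      rw [if_neg (by simp)] at hw
      simp at hw
    | [a, b] =>
      simp [List.getLast] at hlast
      subst hlast
      simp only [walkWeight, layer4] at hw
      split_ifs at hw with h1 h2 <;> simp_all <;> omega
    | [a, b, c] =>
      simp [List.getLast] at hlast
      subst hlast
      simp only [walkWeight, layer4] at hw
      split_ifs at hw with h1 h2 h3 <;> try simp_all
      · obtain ⟨ha1, ha2⟩ := h1
        obtain ⟨hb1, hb2⟩ := h2
        have hc1 : b.1 ≠ v := h3

        have hc1' : v ≠ b.1 := fun h => hc1 h.symm
        refine ⟨a.1, ha1, b.1, hc1', hb1, ?_⟩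
        have e1 := hbound v a.1 ha1
        have e2 := hbound a.1 b.1 hb1
        have e3 := hbound b.1 v hc1
        rw [abs_le] at e1 e2 e3
        rw [← Nat.cast_add, ← Nat.cast_add, Nat.cast_lt] at hw
        omega
    | a :: b :: c :: d :: rest =>
      simp only [walkWeight, layer4] at hw
      split_ifs at hw with h1 h2 h3 h4 <;> try simp_all
      have hd := d.2.isLt

      omega
  · rintro ⟨u, z, hvu, hvz, huz, hneg⟩
    have key : gdist (layer4 w M) (v, 0) (v, 3) ≤
        walkWeight (layer4 w M) (v, 0) [(u, 1), (z, 2), (v, 3)] := by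
      rw [gdist]
      refine le_trans (iInf_le _ ([(u, 1), (z, 2), (v, 3)] : List (V × Fin 4))) ?_
      exact iInf_le _ rfl
    refine lt_of_le_of_lt key ?_
    simp only [walkWeight, layer4]
    rw [if_pos ⟨hvu, by decide⟩, if_pos ⟨huz, by decide⟩, if_pos ⟨Ne.symm hvz, by decide⟩]
    have e1 := hbound v u hvu
    have e2 := hbound u z huz
    have e3 := hbound z v (Ne.symm hvz)
    rw [abs_le] at e1 e2 e3
    rw [add_zero, ← Nat.cast_add, ← Nat.cast_add, Nat.cast_lt]
    omega
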